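/- Let (X,S) be a non-degenerate symmetric (involutive and braided) set-theoretic solution on a finite set X. Then the assignment x ↦ φ_x := f_x^{-1} extends to a group homomorphism φ from the structure group G(X,S) to the symmetric group on X; i.e., whenever S(x₁,x₂) = (x₁′,x₂′), one has φ_{x₁} ∘ φ_{x₂} = φ_{x₁′} ∘ φ_{x₂′}. -/

import Mathlib

/-- Relators of the structure group presentation `⟨X ∣ xy = g_x(y) f_y(x)⟩`. -/
def structGrpRels {X : Type*} (g f : X → X → X) : Set (FreeGroup X) :=
  {w | ∃ x y : X, w = FreeGroup.of x * FreeGroup.of y *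
      (FreeGroup.of (g x y) * FreeGroup.of (f y x))⁻¹}

/-- `S` acting on the first two components of `X³`. -/
def S12 {X : Type*} (S : X × X → X × X) : X × X × X → X × X × X :=
  fun p => ((S (p.1, p.2.1)).1, (S (p.1, p.2.1)).2, p.2.2)

/-- `S` acting on the last two components of `X³`. -/
def S23 {X : Type*} (S : X × X → X × X) : X × X × X → X × X × X :=
  fun p => (p.1, (S (p.2.1, p.2.2)).1, (S (p.2.1, p.2.2)).2)

/-- The braid relation `S¹²S²³S¹² = S²³S¹²S²³`. -/
def Braided {X : Type*} (S : X × X → X × X) : Prop :=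
  S12 S ∘ S23 S ∘ S12 S = S23 S ∘ S12 S ∘ S23 S

/-- `x ↦ φ_x := f_x⁻¹` extends to a group homomorphism from the structure group
`G(X,S)` to the symmetric group on `X`; i.e. whenever `S(x₁,x₂) = (x₁′,x₂′)`,
`φ_{x₁} ∘ φ_{x₂} = φ_{x₁′} ∘ φ_{x₂′}`. -/
theorem stmt_3 {X : Type*} [Fintype X]
    (S : X × X → X × X) (g f : X → X → X)
    (hS : ∀ x y : X, S (x, y) = (g x y, f y x))
    (hg : ∀ x : X, Function.Bijective (g x))
    (hf : ∀ x : X, Function.Bijective (f x))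
    (hinv : ∀ p : X × X, S (S p) = p)
    (hbr : Braided S) :
    (∀ x₁ x₂ x₁' x₂' : X, S (x₁, x₂) = (x₁', x₂') →
        (Equiv.ofBijective (f x₁) (hf x₁)).symm * (Equiv.ofBijective (f x₂) (hf x₂)).symm
          = (Equiv.ofBijective (f x₁') (hf x₁')).symm *
              (Equiv.ofBijective (f x₂') (hf x₂')).symm) ∧
      ∃ Φ : PresentedGroup (structGrpRels g f) →* Equiv.Perm X,
        ∀ x : X, Φ (PresentedGroup.of x) = (Equiv.ofBijective (f x) (hf x)).symm := by

  have key : ∀ x y z : X, f z (f y x) = f (f z y) (f (g y z) x) := by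
    intro x y z
    have h := congrFun hbr (x, y, z)
    simp only [S12, S23, Function.comp_apply, hS] at h
    exact congrArg (fun p : X × X × X => p.2.2) h
  have main : ∀ x₁ x₂ x₁' x₂' : X, S (x₁, x₂) = (x₁', x₂') →
      (Equiv.ofBijective (f x₁) (hf x₁)).symm * (Equiv.ofBijective (f x₂) (hf x₂)).symm
        = (Equiv.ofBijective (f x₁') (hf x₁')).symm *
            (Equiv.ofBijective (f x₂') (hf x₂')).symm := by
    intro x₁ x₂ x₁' x₂' h
    rw [hS] at h
    injection h with h1 h2
    subst h1; subst h2
    have E : (Equiv.ofBijective (f x₂) (hf x₂)) * (Equiv.ofBijective (f x₁) (hf x₁))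
        = (Equiv.ofBijective (f (f x₂ x₁)) (hf _)) *
          (Equiv.ofBijective (f (g x₁ x₂)) (hf _)) := by
      ext w
      exact key w x₁ x₂
    have := congrArg (·⁻¹) E
    simpa [mul_inv_rev, Equiv.Perm.inv_def] using this
  refine ⟨main, ?_⟩
  refine ⟨PresentedGroup.toGroup (f := fun x => (Equiv.ofBijective (f x) (hf x)).symm) ?_,
    fun x => PresentedGroup.toGroup.of ..⟩
  rintro r ⟨x, y, rfl⟩
  simp only [map_mul, map_inv, FreeGroup.lift_apply_of, mul_inv_rev]
  have := main x y (g x y) (f y x) (hS x y)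
  rw [this]
  group
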